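/- Let n ≥ 1, ℓ ∈ {1,…,n}, and let x ∈ ℂ^{n+1} satisfy x_j = 0 for every j with ℓ < j ≤ n and x_{n+1} ≠ 0. Then there exist core transformations C_1, …, C_n ∈ ℂ^{(n+1)×(n+1)}, with C_j having active part at position j, such that C_j equals the transposition matrix F_j (active part [[0,1],[1,0]]) for every j = ℓ+1, …, n, and C_1 C_2 ⋯ C_n x = α e_1 for some α ∈ ℂ with |α| = ‖x‖_2. -/

import Mathlib

open Matrix

noncomputable section

/-- A core transformation with active part at position `j` (0-based; rows/columns
`j` and `j+1` of an `(n+1) × (n+1)` matrix): a unitary matrix equal to the identity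
outside the 2×2 principal submatrix in rows and columns `j, j+1`. -/
def IsCore {n : ℕ} (j : Fin n) (U : Matrix (Fin (n + 1)) (Fin (n + 1)) ℂ) : Prop :=
  U ∈ Matrix.unitaryGroup (Fin (n + 1)) ℂ ∧
  ∀ p q : Fin (n + 1),
    ¬((p = j.castSucc ∨ p = j.succ) ∧ (q = j.castSucc ∨ q = j.succ)) →
      U p q = if p = q then 1 else 0

/-- The permutation matrix of the transposition exchanging coordinates `a` and `b`;
`swapMat t.castSucc t.succ` is the core transformation `F_t` with counteridentity
active part. -/
def swapMat {m : ℕ} (a b : Fin m) : Matrix (Fin m) (Fin m) ℂ :=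
  fun p q => if p = Equiv.swap a b q then 1 else 0

/-- Ordered product `A 0 * A 1 * ⋯ * A (k-1)` of a finite sequence of matrices. -/
def seqProd {m k : ℕ} (A : Fin k → Matrix (Fin m) (Fin m) ℂ) : Matrix (Fin m) (Fin m) ℂ :=
  ((List.finRange k).map A).prod

namespace AnnAux
variable {n : ℕ}

def coreMat (j : Fin n) (a b c d : ℂ) : Matrix (Fin (n+1)) (Fin (n+1)) ℂ :=
  fun p q =>
    if p = j.castSucc then (if q = j.castSucc then a else if q = j.succ then b else 0)
    else if p = j.succ then (if q = j.castSucc then c else if q = j.succ then d else 0)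
    else if p = q then 1 else 0

lemma cs_ne_succ (j : Fin n) : j.castSucc ≠ j.succ := by
  simp [Fin.ext_iff]

lemma coreMat_mulVec (j : Fin n) (a b c d : ℂ) (v : Fin (n+1) → ℂ) :
    (coreMat j a b c d).mulVec v = fun p =>
      if p = j.castSucc then a * v j.castSucc + b * v j.succ
      else if p = j.succ then c * v j.castSucc + d * v j.succ
      else v p := by
  funext p
  have hne := cs_ne_succ j
  simp only [mulVec, dotProduct, coreMat]
  split_ifs with h1 h2
  · have h : ∀ q, (if q = j.castSucc then a else if q = j.succ then b else 0) * v q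
        = (if q = j.castSucc then a * v q else 0) + (if q = j.succ then b * v q else 0) := by
      intro q; split_ifs with hq hq' <;> simp_all
    simp_rw [h]
    rw [Finset.sum_add_distrib, Finset.sum_ite_eq', Finset.sum_ite_eq']
    simp
  · have h : ∀ q, (if q = j.castSucc then c else if q = j.succ then d else 0) * v q
        = (if q = j.castSucc then c * v q else 0) + (if q = j.succ then d * v q else 0) := by
      intro q; split_ifs with hq hq' <;> simp_all
    simp_rw [h]
    rw [Finset.sum_add_distrib, Finset.sum_ite_eq', Finset.sum_ite_eq']
    simp
  · simp_rw [ite_mul, one_mul, zero_mul]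
    rw [Finset.sum_ite_eq]
    simp

lemma star_coreMat (j : Fin n) (a b c d : ℂ) :
    star (coreMat j a b c d) = coreMat j ((starRingEnd ℂ) a) ((starRingEnd ℂ) c)
      ((starRingEnd ℂ) b) ((starRingEnd ℂ) d) := by
  funext p q
  have hne := cs_ne_succ j
  simp only [Matrix.star_apply, coreMat, RCLike.star_def]
  split_ifs <;> first | rfl | (exfalso; subst_vars; simp_all; done) | simp

lemma coreMat_mul (j : Fin n) (a b c d a' b' c' d' : ℂ) :
    coreMat j a b c d * coreMat j a' b' c' d'
      = coreMat j (a*a'+b*c') (a*b'+b*d') (c*a'+d*c') (c*b'+d*d') := by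
  funext p q
  have h : (coreMat j a b c d * coreMat j a' b' c' d') p q
      = ((coreMat j a b c d).mulVec (fun r => coreMat j a' b' c' d' r q)) p := by
    simp [Matrix.mul_apply, mulVec, dotProduct]
  rw [h, coreMat_mulVec]
  have hne := cs_ne_succ j
  simp only [coreMat]
  split_ifs <;> simp_all

lemma coreMat_one (j : Fin n) : coreMat j 1 0 0 1 = (1 : Matrix (Fin (n+1)) (Fin (n+1)) ℂ) := by
  funext p q
  have hne := cs_ne_succ j
  simp only [coreMat, Matrix.one_apply]
  split_ifs <;> simp_all

lemma coreMat_mem_unitary (j : Fin n) (a b c d : ℂ)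
    (h11 : (starRingEnd ℂ) a * a + (starRingEnd ℂ) c * c = 1)
    (h12 : (starRingEnd ℂ) a * b + (starRingEnd ℂ) c * d = 0)
    (h21 : (starRingEnd ℂ) b * a + (starRingEnd ℂ) d * c = 0)
    (h22 : (starRingEnd ℂ) b * b + (starRingEnd ℂ) d * d = 1) :
    coreMat j a b c d ∈ Matrix.unitaryGroup (Fin (n+1)) ℂ := by
  rw [Matrix.mem_unitaryGroup_iff']
  rw [star_coreMat, coreMat_mul, h11, h12, h21, h22, coreMat_one]

lemma coreMat_offband (j : Fin n) (a b c d : ℂ) (p q : Fin (n+1))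
    (h : ¬((p = j.castSucc ∨ p = j.succ) ∧ (q = j.castSucc ∨ q = j.succ))) :
    coreMat j a b c d p q = if p = q then 1 else 0 := by
  have hne := cs_ne_succ j
  simp only [coreMat]
  push_neg at h
  split_ifs <;> first | rfl | (exfalso; subst_vars; simp_all; done) | simp_all

lemma coreMat_eq_swap (j : Fin n) :
    coreMat j 0 1 1 0 = swapMat j.castSucc j.succ := by
  funext p q
  have hne := cs_ne_succ j
  simp only [coreMat, swapMat, Equiv.swap_apply_def]
  split_ifs <;> first | rfl | (exfalso; subst_vars; simp_all; done) | simp_all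

/-! ### Numeric scaffolding -/

def Rsum (ℓ : ℕ) (x : Fin (n+1) → ℂ) (k : ℕ) : ℝ :=
  ‖x (Fin.last n)‖ ^ 2 +
    ∑ i : Fin (n+1), if k ≤ (i:ℕ) ∧ (i:ℕ) ≤ ℓ then ‖x i‖ ^ 2 else 0

def rr (ℓ : ℕ) (x : Fin (n+1) → ℂ) (k : ℕ) : ℝ := Real.sqrt (Rsum ℓ x k)

lemma Rsum_pos (ℓ : ℕ) (x : Fin (n+1) → ℂ) (hxn : x (Fin.last n) ≠ 0) (k : ℕ) :
    0 < Rsum ℓ x k := by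
  have h1 : 0 < ‖x (Fin.last n)‖ ^ 2 := pow_pos (norm_pos_iff.mpr hxn) 2
  have h2 : (0:ℝ) ≤ ∑ i : Fin (n+1), if k ≤ (i:ℕ) ∧ (i:ℕ) ≤ ℓ then ‖x i‖ ^ 2 else 0 := by
    apply Finset.sum_nonneg; intro i _; positivity
  unfold Rsum; linarith

lemma rr_pos (ℓ : ℕ) (x : Fin (n+1) → ℂ) (hxn : x (Fin.last n) ≠ 0) (k : ℕ) :
    0 < rr ℓ x k := Real.sqrt_pos.mpr (Rsum_pos ℓ x hxn k)

lemma rr_sq (ℓ : ℕ) (x : Fin (n+1) → ℂ) (hxn : x (Fin.last n) ≠ 0) (k : ℕ) :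
    rr ℓ x k ^ 2 = Rsum ℓ x k := Real.sq_sqrt (Rsum_pos ℓ x hxn k).le

lemma Rsum_succ (ℓ : ℕ) (x : Fin (n+1) → ℂ) (j : Fin n) (hj : (j:ℕ) ≤ ℓ) :
    Rsum ℓ x (j:ℕ) = ‖x j.castSucc‖ ^ 2 + Rsum ℓ x ((j:ℕ)+1) := by
  unfold Rsum
  have key : ∀ i : Fin (n+1),
      (if (j:ℕ) ≤ (i:ℕ) ∧ (i:ℕ) ≤ ℓ then ‖x i‖ ^ 2 else 0)
      = (if i = j.castSucc then ‖x i‖ ^ 2 else 0)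
        + (if (j:ℕ)+1 ≤ (i:ℕ) ∧ (i:ℕ) ≤ ℓ then ‖x i‖ ^ 2 else 0) := by
    intro i
    have hcs : (i = j.castSucc) ↔ ((i:ℕ) = (j:ℕ)) := by
      rw [Fin.ext_iff]; simp
    by_cases h : (i:ℕ) = (j:ℕ)
    · rw [if_pos (hcs.mpr h), if_pos ⟨by omega, by omega⟩, if_neg (by omega)]
      ring
    · rw [if_neg (fun hh => h (hcs.mp hh))]
      have : ((j:ℕ) ≤ (i:ℕ) ∧ (i:ℕ) ≤ ℓ) ↔ ((j:ℕ)+1 ≤ (i:ℕ) ∧ (i:ℕ) ≤ ℓ) := by omega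
      rw [if_congr this rfl rfl]; ring
  simp_rw [key]
  rw [Finset.sum_add_distrib, Finset.sum_ite_eq' Finset.univ j.castSucc
    (fun i => ‖x i‖ ^ 2)]
  simp; ring

lemma Rsum_top (ℓ : ℕ) (x : Fin (n+1) → ℂ) :
    Rsum ℓ x (ℓ+1) = ‖x (Fin.last n)‖ ^ 2 := by
  unfold Rsum
  have : ∀ i : Fin (n+1), (if ℓ+1 ≤ (i:ℕ) ∧ (i:ℕ) ≤ ℓ then ‖x i‖ ^ 2 else 0) = 0 := by
    intro i; rw [if_neg (by omega)]
  simp_rw [this]; simp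

lemma Rsum_zero (ℓ : ℕ) (x : Fin (n+1) → ℂ) (hℓ : ℓ < n)
    (hx : ∀ j : Fin (n+1), ℓ < (j:ℕ) → (j:ℕ) < n → x j = 0) :
    Rsum ℓ x 0 = ∑ i, ‖x i‖ ^ 2 := by
  unfold Rsum
  have key : ∀ i : Fin (n+1), ‖x i‖ ^ 2
      = (if i = Fin.last n then ‖x (Fin.last n)‖ ^ 2 else 0)
        + (if 0 ≤ (i:ℕ) ∧ (i:ℕ) ≤ ℓ then ‖x i‖ ^ 2 else 0) := by
    intro i
    have hlast : (i = Fin.last n) ↔ ((i:ℕ) = n) := by rw [Fin.ext_iff]; simp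
    have hi : (i:ℕ) < n + 1 := i.isLt
    by_cases h1 : (i:ℕ) ≤ ℓ
    · have hne : i ≠ Fin.last n := fun h => absurd (hlast.mp h) (by omega)
      rw [if_neg hne, if_pos ⟨Nat.zero_le _, h1⟩]; ring
    · by_cases h2 : (i:ℕ) = n
      · have he : i = Fin.last n := hlast.mpr h2
        subst he
        rw [if_pos rfl, if_neg (by omega)]; ring
      · rw [hx i (by omega) (by omega),
          if_neg (fun h => absurd (hlast.mp h) (by omega)), if_neg (by omega)]
        simp
  rw [Finset.sum_congr rfl (fun i _ => key i), Finset.sum_add_distrib,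
    Finset.sum_ite_eq' Finset.univ (Fin.last n) (fun _ => ‖x (Fin.last n)‖ ^ 2)]
  simp

/-! ### The core transformations -/

def gval (ℓ : ℕ) (x : Fin (n+1) → ℂ) (k : ℕ) : ℂ :=
  if k ≤ ℓ then ((rr ℓ x k : ℝ) : ℂ) else x (Fin.last n)

def vvec (ℓ : ℕ) (x : Fin (n+1) → ℂ) (k : ℕ) : Fin (n+1) → ℂ := fun p =>
  if (p:ℕ) < k then x p else if (p:ℕ) = k then gval ℓ x k else 0

def bval (ℓ : ℕ) (x : Fin (n+1) → ℂ) (k : ℕ) : ℂ :=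
  if k = ℓ then x (Fin.last n) else ((rr ℓ x (k+1) : ℝ) : ℂ)

def Cmat (ℓ : ℕ) (x : Fin (n+1) → ℂ) (j : Fin n) : Matrix (Fin (n+1)) (Fin (n+1)) ℂ :=
  if (j:ℕ) ≤ ℓ then
    coreMat j ((starRingEnd ℂ) (x j.castSucc) / ((rr ℓ x (j:ℕ) : ℝ) : ℂ))
              ((starRingEnd ℂ) (bval ℓ x (j:ℕ)) / ((rr ℓ x (j:ℕ) : ℝ) : ℂ))
              (-(bval ℓ x (j:ℕ)) / ((rr ℓ x (j:ℕ) : ℝ) : ℂ))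
              (x j.castSucc / ((rr ℓ x (j:ℕ) : ℝ) : ℂ))
  else coreMat j 0 1 1 0

lemma abs_bval_sq (ℓ : ℕ) (x : Fin (n+1) → ℂ) (hxn : x (Fin.last n) ≠ 0) (k : ℕ)
    (hk : k ≤ ℓ) :
    ‖bval ℓ x k‖ ^ 2 = Rsum ℓ x (k+1) := by
  unfold bval
  by_cases h : k = ℓ
  · rw [if_pos h, h, Rsum_top]
  · rw [if_neg h, Complex.norm_real, Real.norm_eq_abs, abs_of_pos (rr_pos ℓ x hxn (k+1)), rr_sq ℓ x hxn]

lemma rsq_eq (ℓ : ℕ) (x : Fin (n+1) → ℂ) (hxn : x (Fin.last n) ≠ 0) (j : Fin n)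
    (hj : (j:ℕ) ≤ ℓ) :
    (rr ℓ x (j:ℕ)) ^ 2 = ‖x j.castSucc‖ ^ 2 + ‖bval ℓ x (j:ℕ)‖ ^ 2 := by
  rw [rr_sq ℓ x hxn, Rsum_succ ℓ x j hj, abs_bval_sq ℓ x hxn _ hj]

lemma Cmat_mem_unitary (ℓ : ℕ) (x : Fin (n+1) → ℂ) (hxn : x (Fin.last n) ≠ 0) (j : Fin n) :
    Cmat ℓ x j ∈ Matrix.unitaryGroup (Fin (n+1)) ℂ := by
  unfold Cmat
  split_ifs with hj
  · set a₀ := x j.castSucc with ha0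
    set b₀ := bval ℓ x (j:ℕ) with hb0
    set r := rr ℓ x (j:ℕ) with hrdef
    have hr : 0 < r := rr_pos ℓ x hxn _
    have hrC : ((r:ℝ):ℂ) ≠ 0 := by
      simp only [ne_eq, Complex.ofReal_eq_zero]; exact hr.ne'
    have hconj : ∀ z : ℂ, (starRingEnd ℂ) z * z = ((‖z‖ ^ 2 : ℝ) : ℂ) := by
      intro z
      rw [mul_comm, Complex.mul_conj, Complex.normSq_eq_norm_sq]
      
    have hsq : ((r:ℝ):ℂ) ^ 2 = (starRingEnd ℂ) a₀ * a₀ + (starRingEnd ℂ) b₀ * b₀ := by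
      have h2 : (r:ℝ)^2 = ‖a₀‖ ^ 2 + ‖b₀‖ ^ 2 := rsq_eq ℓ x hxn j hj
      have h3 := congrArg (fun t : ℝ => ((t:ℂ))) h2
      push_cast at h3
      rw [h3, hconj, hconj]
      push_cast; try ring
    apply coreMat_mem_unitary
    · rw [map_div₀, map_div₀, Complex.conj_conj, Complex.conj_ofReal, map_neg]
      field_simp
      linear_combination -hsq
    · rw [map_div₀, map_div₀, Complex.conj_conj, Complex.conj_ofReal, map_neg]
      field_simp
      try ring
    · rw [map_div₀, map_div₀, Complex.conj_conj, Complex.conj_ofReal]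
      field_simp
      try ring
    · rw [map_div₀, map_div₀, Complex.conj_conj, Complex.conj_ofReal]
      field_simp
      linear_combination -hsq
  · apply coreMat_mem_unitary <;> simp

lemma Cmat_isCore (ℓ : ℕ) (x : Fin (n+1) → ℂ) (hxn : x (Fin.last n) ≠ 0) (j : Fin n) :
    IsCore j (Cmat ℓ x j) := by
  refine ⟨Cmat_mem_unitary ℓ x hxn j, ?_⟩
  intro p q h
  by_cases hj : (j:ℕ) ≤ ℓ
  · rw [Cmat, if_pos hj]; exact coreMat_offband _ _ _ _ _ _ _ h
  · rw [Cmat, if_neg hj]; exact coreMat_offband _ _ _ _ _ _ _ h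

end AnnAux

namespace AnnAux2
open AnnAux
variable {n : ℕ}

lemma rsqC_eq (ℓ : ℕ) (x : Fin (n+1) → ℂ) (hxn : x (Fin.last n) ≠ 0) (j : Fin n)
    (hj : (j:ℕ) ≤ ℓ) :
    ((rr ℓ x (j:ℕ) : ℝ) : ℂ) ^ 2
      = (starRingEnd ℂ) (x j.castSucc) * (x j.castSucc)
        + (starRingEnd ℂ) (bval ℓ x (j:ℕ)) * (bval ℓ x (j:ℕ)) := by
  have hconj : ∀ z : ℂ, (starRingEnd ℂ) z * z = ((‖z‖ ^ 2 : ℝ) : ℂ) := by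
    intro z
    rw [mul_comm, Complex.mul_conj, Complex.normSq_eq_norm_sq]
  have h2 := rsq_eq ℓ x hxn j hj
  have h3 := congrArg (fun t : ℝ => ((t:ℂ))) h2
  push_cast at h3
  rw [hconj, hconj, h3]
  push_cast; ring

lemma gval_succ (ℓ : ℕ) (x : Fin (n+1) → ℂ) (k : ℕ) (hk : k ≤ ℓ) :
    gval ℓ x (k+1) = bval ℓ x k := by
  unfold gval bval
  by_cases h : k = ℓ
  · rw [if_neg (by omega), if_pos h]
  · rw [if_pos (by omega), if_neg h]

lemma vvec_offband (ℓ : ℕ) (x : Fin (n+1) → ℂ) (k : ℕ) (p : Fin (n+1))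
    (h1 : (p:ℕ) ≠ k) (h2 : (p:ℕ) ≠ k+1) : vvec ℓ x (k+1) p = vvec ℓ x k p := by
  simp only [vvec]
  split_ifs <;> first | rfl | omega

lemma vvec_cs (ℓ : ℕ) (x : Fin (n+1) → ℂ) (j : Fin n) :
    vvec ℓ x ((j:ℕ)+1) j.castSucc = x j.castSucc := by
  simp only [vvec, Fin.coe_castSucc]
  rw [if_pos (by omega)]

lemma vvec_succ (ℓ : ℕ) (x : Fin (n+1) → ℂ) (j : Fin n) :
    vvec ℓ x ((j:ℕ)+1) j.succ = gval ℓ x ((j:ℕ)+1) := by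
  simp only [vvec, Fin.val_succ]
  rw [if_neg (by omega)]; simp

lemma vvec_at_cs (ℓ : ℕ) (x : Fin (n+1) → ℂ) (j : Fin n) :
    vvec ℓ x (j:ℕ) j.castSucc = gval ℓ x (j:ℕ) := by
  simp only [vvec, Fin.coe_castSucc]
  rw [if_neg (by omega)]; simp

lemma vvec_at_succ (ℓ : ℕ) (x : Fin (n+1) → ℂ) (j : Fin n) :
    vvec ℓ x (j:ℕ) j.succ = 0 := by
  simp only [vvec, Fin.val_succ]
  rw [if_neg (by omega), if_neg (by omega)]

lemma step_le (ℓ : ℕ) (x : Fin (n+1) → ℂ) (hxn : x (Fin.last n) ≠ 0) (j : Fin n)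
    (hj : (j:ℕ) ≤ ℓ) :
    (Cmat ℓ x j).mulVec (vvec ℓ x ((j:ℕ)+1)) = vvec ℓ x (j:ℕ) := by
  rw [Cmat, if_pos hj, coreMat_mulVec]
  funext p
  have hr : 0 < rr ℓ x (j:ℕ) := rr_pos ℓ x hxn _
  have hrC : ((rr ℓ x (j:ℕ) : ℝ) : ℂ) ≠ 0 := by
    simp only [ne_eq, Complex.ofReal_eq_zero]; exact hr.ne'
  have hsq := rsqC_eq ℓ x hxn j hj
  by_cases hp1 : p = j.castSucc
  · subst hp1
    rw [if_pos rfl, vvec_cs, vvec_succ, gval_succ ℓ x _ hj, vvec_at_cs, gval, if_pos hj]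
    field_simp
    linear_combination -hsq
  · by_cases hp2 : p = j.succ
    · subst hp2
      rw [if_neg hp1, if_pos rfl, vvec_cs, vvec_succ, gval_succ ℓ x _ hj, vvec_at_succ]
      field_simp
      ring
    · rw [if_neg hp1, if_neg hp2]
      apply vvec_offband
      · exact fun h => hp1 (Fin.ext (by simpa using h))
      · exact fun h => hp2 (Fin.ext (by simpa using h))

lemma step_gt (ℓ : ℕ) (x : Fin (n+1) → ℂ)
    (hx : ∀ i : Fin (n+1), ℓ < (i:ℕ) → (i:ℕ) < n → x i = 0) (j : Fin n)
    (hj : ℓ < (j:ℕ)) :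
    (Cmat ℓ x j).mulVec (vvec ℓ x ((j:ℕ)+1)) = vvec ℓ x (j:ℕ) := by
  rw [Cmat, if_neg (by omega), coreMat_mulVec]
  funext p
  by_cases hp1 : p = j.castSucc
  · subst hp1
    rw [if_pos rfl, vvec_cs, vvec_succ, vvec_at_cs]
    rw [gval, if_neg (by omega), gval, if_neg (by omega)]
    ring
  · by_cases hp2 : p = j.succ
    · subst hp2
      rw [if_neg hp1, if_pos rfl, vvec_cs, vvec_succ, vvec_at_succ]
      rw [hx j.castSucc (by simpa using hj) (by simp)]
      ring
    · rw [if_neg hp1, if_neg hp2]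
      apply vvec_offband
      · exact fun h => hp1 (Fin.ext (by simpa using h))
      · exact fun h => hp2 (Fin.ext (by simpa using h))

lemma tail_prod (ℓ : ℕ) (hℓ : ℓ < n) (x : Fin (n+1) → ℂ)
    (hx : ∀ i : Fin (n+1), ℓ < (i:ℕ) → (i:ℕ) < n → x i = 0)
    (hxn : x (Fin.last n) ≠ 0) :
    ∀ m k : ℕ, k + m = n →
      ((((List.finRange n).drop k).map (Cmat ℓ x)).prod).mulVec x = vvec ℓ x k := by
  intro m
  induction m with
  | zero =>
    intro k hk
    have hk' : k = n := by omega
    rw [List.drop_eq_nil_of_le (by simp [hk']), List.map_nil, List.prod_nil, Matrix.one_mulVec]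
    funext p
    simp only [vvec]
    by_cases hp : (p:ℕ) < n
    · rw [if_pos (by omega)]
    · have hpn : (p:ℕ) = n := by have := p.isLt; omega
      have hpl : p = Fin.last n := Fin.ext (by simpa using hpn)
      rw [if_neg (by omega), if_pos (by omega), gval, if_neg (by omega), hpl]
  | succ m ih =>
    intro k hk
    have hkn : k < n := by omega
    have hdrop : (List.finRange n).drop k = (⟨k, hkn⟩ : Fin n) :: (List.finRange n).drop (k+1) := by
      rw [List.drop_eq_getElem_cons (by simpa using hkn)]
      congr 1
      simp
    rw [hdrop, List.map_cons, List.prod_cons, ← Matrix.mulVec_mulVec, ih (k+1) (by omega)]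
    by_cases hk2 : k ≤ ℓ
    · exact step_le ℓ x hxn ⟨k, hkn⟩ hk2
    · exact step_gt ℓ x hx ⟨k, hkn⟩ (by simpa using (by omega : ℓ < k))

end AnnAux2

/-- Annihilation of a spike vector: if `x ∈ ℂ^{n+1}` vanishes on entries strictly
between position `ℓ` and the last one, and its last entry is nonzero, there are core
transformations `C₁, …, C_n` with `C_j = F_j` for `j > ℓ` (1-based) such that
`C₁ ⋯ C_n x = α e₁` with `|α| = ‖x‖₂`.  (Here `ℓ : Fin n` is the 0-based index of the
1-based position `ℓ + 1 ∈ {1, …, n}`.) -/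
theorem annihilate_spike_vector (n : ℕ) (hn : 1 ≤ n) (ℓ : Fin n)
    (x : Fin (n + 1) → ℂ)
    (hx : ∀ j : Fin (n + 1), (ℓ : ℕ) < (j : ℕ) → (j : ℕ) < n → x j = 0)
    (hxn : x (Fin.last n) ≠ 0) :
    ∃ C : Fin n → Matrix (Fin (n + 1)) (Fin (n + 1)) ℂ,
      (∀ j, IsCore j (C j)) ∧
      (∀ j : Fin n, (ℓ : ℕ) < (j : ℕ) → C j = swapMat j.castSucc j.succ) ∧
      ∃ α : ℂ, ‖α‖ = Real.sqrt (∑ i, ‖x i‖ ^ 2) ∧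
        (seqProd C).mulVec x = α • (Pi.single (0 : Fin (n + 1)) 1 : Fin (n + 1) → ℂ) := by
  have hℓ : (ℓ:ℕ) < n := ℓ.isLt
  refine ⟨AnnAux.Cmat (ℓ:ℕ) x, fun j => AnnAux.Cmat_isCore _ x hxn j, ?_, ?_⟩
  · intro j hj
    rw [AnnAux.Cmat, if_neg (by omega), AnnAux.coreMat_eq_swap]
  · refine ⟨((AnnAux.rr (ℓ:ℕ) x 0 : ℝ) : ℂ), ?_, ?_⟩
    · rw [Complex.norm_real, Real.norm_eq_abs, abs_of_pos (AnnAux.rr_pos _ x hxn 0), AnnAux.rr,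
        AnnAux.Rsum_zero _ x hℓ hx]
    · have ht := AnnAux2.tail_prod (ℓ:ℕ) hℓ x hx hxn n 0 (by omega)
      rw [List.drop_zero] at ht
      rw [seqProd, ht]
      funext p
      simp only [Pi.smul_apply, Pi.single_apply, smul_eq_mul]
      by_cases hp : p = 0
      · subst hp
        rw [if_pos rfl, mul_one]
        simp only [AnnAux.vvec, AnnAux.gval]
        norm_num
      · have hpv : (p:ℕ) ≠ 0 := fun h => hp (Fin.ext (by simpa using h))
        rw [if_neg hp, mul_zero]
        simp only [AnnAux.vvec]
        rw [if_neg (by omega), if_neg hpv]
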